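/- Let x ∈ ℂⁿ with ‖x‖ = 1 and let z₁, z₂ ∈ ℂⁿ satisfy max(‖z₁ − x‖, ‖z₂ − x‖) ≤ γ ≤ 1/4. Let αᵢ = argmin over unimodular α of ‖zᵢ − α x‖, i.e., αᵢ = (x* zᵢ)/|x* zᵢ|. Then ‖conj(α₁) z₁ − conj(α₂) z₂‖ ≤ 6‖z₁ − z₂‖. -/

import Mathlib

lemma phase_diff_aux (a b : ℂ) (m : ℝ) (hm : 0 < m) (ha : m ≤ ‖a‖) (hb : m ≤ ‖b‖) :
    ‖a / (‖a‖ : ℂ) - b / (‖b‖ : ℂ)‖ ≤ 2 * ‖a - b‖ / m := by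
  have ha0 : (0:ℝ) < ‖a‖ := lt_of_lt_of_le hm ha
  have hb0 : (0:ℝ) < ‖b‖ := lt_of_lt_of_le hm hb
  have ha0' : (‖a‖ : ℂ) ≠ 0 := by exact_mod_cast ha0.ne'
  have hb0' : (‖b‖ : ℂ) ≠ 0 := by exact_mod_cast hb0.ne'
  have key : a / (‖a‖ : ℂ) - b / (‖b‖ : ℂ)
      = (a - b) / (‖a‖ : ℂ) + b * ((‖b‖ : ℂ) - (‖a‖ : ℂ)) / ((‖a‖ : ℂ) * (‖b‖ : ℂ)) := by
    rw [div_add_div _ _ ha0' (mul_ne_zero ha0' hb0'), div_sub_div _ _ ha0' hb0',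
        div_eq_div_iff (mul_ne_zero ha0' hb0') (mul_ne_zero ha0' (mul_ne_zero ha0' hb0'))]
    ring
  rw [key]
  have h1 : ‖(a - b) / (‖a‖ : ℂ)‖ = ‖a - b‖ / ‖a‖ := by
    rw [norm_div]; simp
  have h2 : ‖b * ((‖b‖ : ℂ) - (‖a‖ : ℂ)) / ((‖a‖ : ℂ) * (‖b‖ : ℂ))‖
      = ‖b‖ * ‖((‖b‖ : ℂ) - (‖a‖ : ℂ))‖ / (‖a‖ * ‖b‖) := by
    rw [norm_div, norm_mul, norm_mul]; simp
  have h3 : ‖((‖b‖ : ℂ) - (‖a‖ : ℂ))‖ ≤ ‖a - b‖ := by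
    have : ((‖b‖ : ℂ) - (‖a‖ : ℂ)) = ((‖b‖ - ‖a‖ : ℝ) : ℂ) := by push_cast; ring
    rw [this, Complex.norm_real]
    calc |‖b‖ - ‖a‖| ≤ ‖b - a‖ := abs_norm_sub_norm_le b a
      _ = ‖a - b‖ := norm_sub_rev b a
  calc ‖(a - b) / (‖a‖ : ℂ) + b * ((‖b‖ : ℂ) - (‖a‖ : ℂ)) / ((‖a‖ : ℂ) * (‖b‖ : ℂ))‖
      ≤ ‖(a - b) / (‖a‖ : ℂ)‖ + ‖b * ((‖b‖ : ℂ) - (‖a‖ : ℂ)) / ((‖a‖ : ℂ) * (‖b‖ : ℂ))‖ :=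
        norm_add_le _ _
    _ = ‖a - b‖ / ‖a‖ + ‖b‖ * ‖((‖b‖ : ℂ) - (‖a‖ : ℂ))‖ / (‖a‖ * ‖b‖) := by rw [h1, h2]
    _ = ‖a - b‖ / ‖a‖ + ‖((‖b‖ : ℂ) - (‖a‖ : ℂ))‖ / ‖a‖ := by
        rw [mul_comm ‖a‖ ‖b‖, mul_div_mul_left _ _ hb0.ne']
    _ ≤ ‖a - b‖ / ‖a‖ + ‖a - b‖ / ‖a‖ := by
        gcongr
    _ = 2 * ‖a - b‖ / ‖a‖ := by ring
    _ ≤ 2 * ‖a - b‖ / m := by gcongr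

/-- For a unit vector `x` and `z₁, z₂` within distance `γ ≤ 1/4` of `x`, with aligning
phases `αᵢ = (x* zᵢ)/|x* zᵢ|`, one has `‖conj(α₁) z₁ - conj(α₂) z₂‖ ≤ 6‖z₁ - z₂‖`. -/
theorem stmt3 {n : ℕ} (x z₁ z₂ : EuclideanSpace ℂ (Fin n)) (γ : ℝ)
    (hx : ‖x‖ = 1) (h1 : ‖z₁ - x‖ ≤ γ) (h2 : ‖z₂ - x‖ ≤ γ) (hγ : γ ≤ 1 / 4)
    (α₁ α₂ : ℂ)
    (hα₁ : α₁ = (inner ℂ x z₁ : ℂ) / (‖(inner ℂ x z₁ : ℂ)‖ : ℂ))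
    (hα₂ : α₂ = (inner ℂ x z₂ : ℂ) / (‖(inner ℂ x z₂ : ℂ)‖ : ℂ)) :
    ‖(starRingEnd ℂ) α₁ • z₁ - (starRingEnd ℂ) α₂ • z₂‖ ≤ 6 * ‖z₁ - z₂‖ := by
  set β₁ : ℂ := (inner ℂ x z₁ : ℂ) with hβ₁
  set β₂ : ℂ := (inner ℂ x z₂ : ℂ) with hβ₂
  have hxx : (inner ℂ x x : ℂ) = 1 := by
    rw [inner_self_eq_norm_sq_to_K, hx]; norm_num
  -- |βᵢ - 1| ≤ γ
  have hb1 : ‖β₁ - 1‖ ≤ γ := by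
    have : β₁ - 1 = (inner ℂ x (z₁ - x) : ℂ) := by rw [inner_sub_right, hxx]
    rw [this]
    calc ‖(inner ℂ x (z₁ - x) : ℂ)‖ ≤ ‖x‖ * ‖z₁ - x‖ := norm_inner_le_norm x _
      _ = ‖z₁ - x‖ := by rw [hx, one_mul]
      _ ≤ γ := h1
  have hb2 : ‖β₂ - 1‖ ≤ γ := by
    have : β₂ - 1 = (inner ℂ x (z₂ - x) : ℂ) := by rw [inner_sub_right, hxx]
    rw [this]
    calc ‖(inner ℂ x (z₂ - x) : ℂ)‖ ≤ ‖x‖ * ‖z₂ - x‖ := norm_inner_le_norm x _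
      _ = ‖z₂ - x‖ := by rw [hx, one_mul]
      _ ≤ γ := h2
  have hm1 : (3/4 : ℝ) ≤ ‖β₁‖ := by
    have := norm_sub_norm_le (1 : ℂ) (1 - β₁)
    simp only [norm_one, sub_sub_cancel] at this
    have h' : ‖1 - β₁‖ = ‖β₁ - 1‖ := norm_sub_rev _ _
    linarith [hb1, h'.symm ▸ hb1]
  have hm2 : (3/4 : ℝ) ≤ ‖β₂‖ := by
    have := norm_sub_norm_le (1 : ℂ) (1 - β₂)
    simp only [norm_one, sub_sub_cancel] at this
    have h' : ‖1 - β₂‖ = ‖β₂ - 1‖ := norm_sub_rev _ _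
    linarith [hb2, h'.symm ▸ hb2]
  -- rewrite αs using norms
  have hα₁' : α₁ = β₁ / (‖β₁‖ : ℂ) := by rw [hα₁]
  have hα₂' : α₂ = β₂ / (‖β₂‖ : ℂ) := by rw [hα₂]
  have hβd : ‖β₁ - β₂‖ ≤ ‖z₁ - z₂‖ := by
    have : β₁ - β₂ = (inner ℂ x (z₁ - z₂) : ℂ) := by rw [inner_sub_right]
    rw [this]
    calc ‖(inner ℂ x (z₁ - z₂) : ℂ)‖ ≤ ‖x‖ * ‖z₁ - z₂‖ := norm_inner_le_norm x _
      _ = ‖z₁ - z₂‖ := by rw [hx, one_mul]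
  have hαd : ‖α₁ - α₂‖ ≤ 8/3 * ‖z₁ - z₂‖ := by
    rw [hα₁', hα₂']
    calc ‖β₁ / (‖β₁‖ : ℂ) - β₂ / (‖β₂‖ : ℂ)‖ ≤ 2 * ‖β₁ - β₂‖ / (3/4) :=
          phase_diff_aux β₁ β₂ (3/4) (by norm_num) hm1 hm2
      _ = 8/3 * ‖β₁ - β₂‖ := by ring
      _ ≤ 8/3 * ‖z₁ - z₂‖ := by linarith
  have hα₁norm : ‖α₁‖ = 1 := by
    rw [hα₁', norm_div, Complex.norm_real, Real.norm_eq_abs, abs_norm,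
        div_self (by linarith : ‖β₁‖ ≠ 0)]
  have hz2 : ‖z₂‖ ≤ 5/4 := by
    have := norm_sub_norm_le z₂ x
    rw [hx] at this
    linarith [le_trans h2 hγ]
  have hsplit : (starRingEnd ℂ) α₁ • z₁ - (starRingEnd ℂ) α₂ • z₂
      = (starRingEnd ℂ) α₁ • (z₁ - z₂) + ((starRingEnd ℂ) α₁ - (starRingEnd ℂ) α₂) • z₂ := by
    rw [smul_sub, sub_smul]; abel
  rw [hsplit]
  have hconj : ‖(starRingEnd ℂ) α₁ - (starRingEnd ℂ) α₂‖ = ‖α₁ - α₂‖ := by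
    rw [← map_sub, RCLike.norm_conj]
  calc ‖(starRingEnd ℂ) α₁ • (z₁ - z₂) + ((starRingEnd ℂ) α₁ - (starRingEnd ℂ) α₂) • z₂‖
      ≤ ‖(starRingEnd ℂ) α₁ • (z₁ - z₂)‖ + ‖((starRingEnd ℂ) α₁ - (starRingEnd ℂ) α₂) • z₂‖ :=
        norm_add_le _ _
    _ = ‖α₁‖ * ‖z₁ - z₂‖ + ‖α₁ - α₂‖ * ‖z₂‖ := by
        rw [norm_smul, norm_smul, RCLike.norm_conj, hconj]
    _ ≤ 1 * ‖z₁ - z₂‖ + (8/3 * ‖z₁ - z₂‖) * (5/4) := by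
        rw [hα₁norm]
        gcongr
    _ ≤ 6 * ‖z₁ - z₂‖ := by
        have := norm_nonneg (z₁ - z₂)
        nlinarith
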